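/- arXiv:1011.0941 — 2 statements merged into one kernel-verified Lean document; each statement's English description precedes it below -/
import Mathlib

section
/- Let n, h, k be integers with k > h ≥ 0 and n ≡ h (mod 2). Then the total number of k-down steps, summed over all generalized Dyck paths from (0,0) to (n,h), equals C(n, (n−h)/2 + k) − C(n, (n+h)/2 + k + 1). -/
open Finset

attribute [local instance] Classical.propDecidable

/-- The height of the lattice path `p` (where `true` is a northeast step `(1,1)` and
`false` is a southeast step `(1,-1)`) after its first `i` steps. -/
def pathHeight {n : ℕ} (p : Fin n → Bool) (i : ℕ) : ℤ :=
  ∑ j ∈ Finset.univ.filter (fun j : Fin n => (j : ℕ) < i), (if p j then (1 : ℤ) else -1)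

/-- `p` is a generalized Dyck path from `(0,0)` to `(n,h)`: it ends at height `h`
and never goes below the x-axis. -/
def IsGDPath {n : ℕ} (h : ℤ) (p : Fin n → Bool) : Prop :=
  pathHeight p n = h ∧ ∀ i ≤ n, 0 ≤ pathHeight p i

/-- The set of generalized Dyck paths from `(0,0)` to `(n,h)`. -/
noncomputable def gdPaths (n : ℕ) (h : ℤ) : Finset (Fin n → Bool) :=
  Finset.univ.filter (IsGDPath h)

/-- The number of `k`-down steps of `p`, i.e. southeast steps from height `k` to `k-1`. -/
noncomputable def downSteps {n : ℕ} (k : ℤ) (p : Fin n → Bool) : ℕ :=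
  (Finset.univ.filter (fun i : Fin n => p i = false ∧ pathHeight p (i : ℕ) = k)).card

/-- Binomial coefficient on integers, `0` unless `0 ≤ b ≤ a`. -/
def binom (a b : ℤ) : ℤ :=
  if 0 ≤ b ∧ b ≤ a then (a.toNat.choose b.toNat : ℤ) else 0

-- Auxiliary lemmas

lemma binom_eq_choose (n : ℕ) (b : ℤ) (hb : 0 ≤ b) : binom n b = (n.choose b.toNat : ℤ) := by
  unfold binom
  split
  · simp
  · have hb' : (n : ℤ) < b := by omega
    rw [Nat.choose_eq_zero_of_lt (by omega)]
    simp

lemma binom_neg (n : ℕ) (b : ℤ) (hb : b < 0) : binom n b = 0 := by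
  unfold binom; rw [if_neg]; omega

lemma binom_pascal (n : ℕ) (b : ℤ) :
    binom (n + 1 : ℕ) b = binom n b + binom n (b - 1) := by
  rcases lt_trichotomy b 0 with hb | hb | hb
  · rw [binom_neg _ _ hb, binom_neg _ _ hb, binom_neg _ _ (by omega)]; ring
  · subst hb
    rw [binom_eq_choose _ _ le_rfl, binom_eq_choose _ _ le_rfl, binom_neg _ _ (by omega)]
    simp
  · rw [binom_eq_choose _ _ (by omega), binom_eq_choose _ _ (by omega),
      binom_eq_choose _ _ (by omega)]
    have h1 : b.toNat = (b - 1).toNat + 1 := by omega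
    rw [h1, Nat.choose_succ_succ]
    push_cast
    ring

lemma pathHeight_eq_sum_ite {n : ℕ} (p : Fin n → Bool) (i : ℕ) :
    pathHeight p i = ∑ j : Fin n, if (j : ℕ) < i then (if p j then (1 : ℤ) else -1) else 0 := by
  rw [pathHeight, Finset.sum_filter]

lemma pathHeight_snoc {n : ℕ} (q : Fin n → Bool) (b : Bool) (i : ℕ) :
    pathHeight (Fin.snoc q b : Fin (n+1) → Bool) i =
      pathHeight q i + if n < i then (if b then (1:ℤ) else -1) else 0 := by
  rw [pathHeight_eq_sum_ite, pathHeight_eq_sum_ite, Fin.sum_univ_castSucc]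
  simp [Fin.snoc_castSucc]

lemma pathHeight_snoc_of_le {n : ℕ} (q : Fin n → Bool) (b : Bool) {i : ℕ} (hi : i ≤ n) :
    pathHeight (Fin.snoc q b : Fin (n+1) → Bool) i = pathHeight q i := by
  rw [pathHeight_snoc, if_neg (by omega), add_zero]

lemma pathHeight_snoc_top {n : ℕ} (q : Fin n → Bool) (b : Bool) :
    pathHeight (Fin.snoc q b : Fin (n+1) → Bool) (n+1) =
      pathHeight q n + (if b then (1:ℤ) else -1) := by
  have : pathHeight q (n+1) = pathHeight q n := by
    rw [pathHeight_eq_sum_ite, pathHeight_eq_sum_ite]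
    refine Finset.sum_congr rfl fun j _ => ?_
    have h1 : (j:ℕ) < n + 1 := by omega
    have h2 : (j:ℕ) < n := j.isLt
    rw [if_pos h1, if_pos h2]
  rw [pathHeight_snoc, if_pos (by omega), this]

lemma isGDPath_snoc_iff {n : ℕ} {h : ℤ} (h0 : 0 ≤ h) (q : Fin n → Bool) (b : Bool) :
    IsGDPath h (Fin.snoc q b : Fin (n+1) → Bool) ↔
      IsGDPath (h - if b then 1 else -1) q := by
  constructor
  · rintro ⟨hend, hnn⟩
    refine ⟨?_, fun i hi => ?_⟩
    · rw [pathHeight_snoc_top] at hend; omega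
    · rw [← pathHeight_snoc_of_le q b hi]; exact hnn i (by omega)
  · rintro ⟨hend, hnn⟩
    refine ⟨?_, fun i hi => ?_⟩
    · rw [pathHeight_snoc_top, hend]; ring
    · rcases Nat.lt_or_ge i (n+1) with hi' | hi'
      · rw [pathHeight_snoc_of_le q b (by omega)]; exact hnn i (by omega)
      · have : i = n + 1 := by omega
        subst this
        rw [pathHeight_snoc_top, hend]
        omega

lemma downSteps_snoc {n : ℕ} (k : ℤ) (q : Fin n → Bool) (b : Bool) :
    downSteps k (Fin.snoc q b : Fin (n+1) → Bool) =
      downSteps k q + (if b = false ∧ pathHeight q n = k then 1 else 0) := by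
  unfold downSteps
  rw [Finset.card_filter, Finset.card_filter, Fin.sum_univ_castSucc]
  congr 1
  · refine Finset.sum_congr rfl fun j _ => ?_
    rw [Fin.snoc_castSucc]
    have hj : ((j.castSucc : Fin (n+1)) : ℕ) = (j : ℕ) := rfl
    rw [hj, pathHeight_snoc_of_le q b (le_of_lt j.isLt)]
  · rw [Fin.snoc_last]
    have hl : ((Fin.last n : Fin (n+1)) : ℕ) = n := rfl
    rw [hl, pathHeight_snoc_of_le q b le_rfl]


lemma sum_gdPaths_succ {M : Type*} [AddCommMonoid M] (n : ℕ) (h : ℤ) (h0 : 0 ≤ h)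
    (f : (Fin (n+1) → Bool) → M) :
    ∑ p ∈ gdPaths (n+1) h, f p =
      (∑ q ∈ gdPaths n (h-1), f (Fin.snoc q true)) +
      ∑ q ∈ gdPaths n (h+1), f (Fin.snoc q false) := by
  classical
  rw [gdPaths, gdPaths, gdPaths, Finset.sum_filter, Finset.sum_filter, Finset.sum_filter]
  rw [← Fintype.sum_equiv (Fin.snocEquiv (fun _ => Bool))
    (fun x => if IsGDPath h (Fin.snoc x.2 x.1 : Fin (n+1) → Bool)
      then f (Fin.snoc x.2 x.1) else 0)
    (fun p => if IsGDPath h p then f p else 0) (fun x => rfl)]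
  rw [Fintype.sum_prod_type, Fintype.sum_bool]
  congr 1
  · refine Finset.sum_congr rfl fun q _ => ?_
    rw [isGDPath_snoc_iff h0]
    norm_num
  · refine Finset.sum_congr rfl fun q _ => ?_
    rw [isGDPath_snoc_iff h0]
    norm_num
lemma gdPaths_neg (n : ℕ) (h : ℤ) (hh : h < 0) : gdPaths n h = ∅ := by
  rw [gdPaths, Finset.filter_eq_empty_iff]
  rintro p - ⟨hend, hnn⟩
  have := hnn n le_rfl
  omega

lemma pathHeight_fin_zero (p : Fin 0 → Bool) (i : ℕ) : pathHeight p i = 0 := by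
  simp [pathHeight]

lemma gdPaths_zero (h : ℤ) : gdPaths 0 h = if h = 0 then Finset.univ else ∅ := by
  rw [gdPaths]
  split
  · subst ‹h = 0›
    rw [Finset.filter_eq_self]
    intro p _
    exact ⟨pathHeight_fin_zero p 0, fun i _ => by rw [pathHeight_fin_zero]⟩
  · rw [Finset.filter_eq_empty_iff]
    rintro p - ⟨hend, -⟩
    rw [pathHeight_fin_zero] at hend
    omega

lemma card_univ_fin_zero_bool : (Finset.univ : Finset (Fin 0 → Bool)).card = 1 := by
  simp [Finset.card_univ]

lemma binom_zero (b : ℤ) : binom 0 b = if b = 0 then 1 else 0 := by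
  unfold binom
  rcases eq_or_ne b 0 with rfl | hb
  · norm_num
  · rw [if_neg (by omega), if_neg hb]

lemma G_formula : ∀ (n : ℕ) (h : ℤ), -1 ≤ h → (n : ℤ) % 2 = h % 2 →
    ((gdPaths n h).card : ℤ) = binom n ((n+h)/2) - binom n ((n+h)/2+1) := by
  intro n
  induction n with
  | zero =>
    intro h hh hpar
    simp only [Nat.cast_zero] at hpar ⊢
    have hh0 : 0 ≤ h := by omega
    rw [gdPaths_zero, binom_zero, binom_zero]
    rcases eq_or_ne h 0 with rfl | hne
    · rw [if_pos rfl, card_univ_fin_zero_bool]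
      norm_num
    · have h2 : 2 ≤ h := by omega
      rw [if_neg hne, if_neg (by omega), if_neg (by omega)]
      simp
  | succ n ih =>
    intro h hh hpar
    rcases eq_or_lt_of_le hh with rfl | hh0
    · -- h = -1
      rw [gdPaths_neg _ _ (by norm_num)]
      have hodd : (n : ℤ) % 2 = 0 := by push_cast at hpar ⊢; omega
      set m : ℕ := n / 2 with hm
      have hn2 : (n : ℤ) = 2 * m := by omega
      have e1 : ((n+1 : ℕ) : ℤ) + -1 = 2 * m := by push_cast; omega
      have e2 : (((n+1:ℕ):ℤ) + -1)/2 = (m : ℤ) := by omega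
      rw [e2, binom_eq_choose _ _ (by positivity), binom_eq_choose _ _ (by positivity)]
      have t1 : ((m : ℤ)).toNat = m := by omega
      have t2 : ((m : ℤ) + 1).toNat = m + 1 := by omega
      rw [t1, t2]
      have hsym : (n+1).choose (m+1) = (n+1).choose m := by
        have : m + 1 = (n + 1) - m := by omega
        rw [this, Nat.choose_symm (by omega)]
      rw [hsym]
      simp
    · -- h ≥ 0
      have h0 : 0 ≤ h := by omega
      have hcard : ((gdPaths (n+1) h).card : ℤ) =
          ((gdPaths n (h-1)).card : ℤ) + ((gdPaths n (h+1)).card : ℤ) := by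
        have := sum_gdPaths_succ n h h0 (fun _ => (1:ℤ))
        simpa [Finset.sum_const] using this
      rw [hcard, ih (h-1) (by omega) (by push_cast at hpar ⊢; omega),
        ih (h+1) (by omega) (by push_cast at hpar ⊢; omega)]
      have hpar' : ((n:ℤ) + h + 1) % 2 = 0 := by push_cast at hpar ⊢; omega
      set s : ℤ := ((n:ℤ) + h + 1)/2 with hs
      have e1 : ((n:ℤ) + (h-1))/2 = s - 1 := by omega
      have e2 : ((n:ℤ) + (h+1))/2 = s := by omega
      have e3 : (((n+1:ℕ):ℤ) + h)/2 = s := by push_cast; omega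
      rw [e1, e2, e3, binom_pascal, binom_pascal]
      ring

lemma downSteps_fin_zero (k : ℤ) (p : Fin 0 → Bool) : downSteps k p = 0 := by
  simp [downSteps]

lemma F_formula (k : ℤ) (hk : 1 ≤ k) : ∀ (n : ℕ) (h : ℤ), -1 ≤ h → (n : ℤ) % 2 = h % 2 →
    ((∑ p ∈ gdPaths n h, downSteps k p : ℕ) : ℤ) =
      binom n ((n+h)/2 + (if h < k then k - h else 1)) - binom n ((n+h)/2 + k + 1) := by
  intro n
  induction n with
  | zero =>
    intro h hh hpar
    simp only [Nat.cast_zero] at hpar ⊢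
    have hh0 : 0 ≤ h := by omega
    have hLHS : ∀ p ∈ gdPaths 0 h, downSteps k p = 0 := fun p _ => downSteps_fin_zero k p
    rw [Finset.sum_congr rfl hLHS, Finset.sum_const, smul_zero, Nat.cast_zero,
      binom_zero, binom_zero]
    split_ifs <;> omega
  | succ n ih =>
    intro h hh hpar
    rcases eq_or_lt_of_le hh with rfl | hh0
    · -- h = -1
      rw [gdPaths_neg _ _ (by norm_num), if_pos (by omega)]
      have e : (((n+1:ℕ):ℤ) + -1)/2 + (k - -1) = (((n+1:ℕ):ℤ) + -1)/2 + k + 1 := by ring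
      rw [e, sub_self, Finset.sum_empty]
      simp
    · have h0 : 0 ≤ h := by omega
      have key : (∑ p ∈ gdPaths (n+1) h, downSteps k p) =
          (∑ q ∈ gdPaths n (h-1), downSteps k q) +
          ((∑ q ∈ gdPaths n (h+1), downSteps k q) +
            (if h + 1 = k then (gdPaths n (h+1)).card else 0)) := by
        rw [sum_gdPaths_succ n h h0 (downSteps k)]
        congr 1
        · refine Finset.sum_congr rfl fun q hq => ?_
          rw [downSteps_snoc]
          simp
        · calc ∑ q ∈ gdPaths n (h+1), downSteps k (Fin.snoc q false)
              = ∑ q ∈ gdPaths n (h+1), (downSteps k q + if h + 1 = k then 1 else 0) := by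
                refine Finset.sum_congr rfl fun q hq => ?_
                rw [downSteps_snoc]
                have hq' : pathHeight q n = h + 1 :=
                  ((Finset.mem_filter.mp hq).2).1
                congr 1
                refine if_congr ?_ rfl rfl
                rw [hq']
                simp
            _ = _ := by
                rw [Finset.sum_add_distrib]
                congr 1
                split_ifs
                · simp [Finset.sum_const]
                · simp
      have hpar1 : (n : ℤ) % 2 = (h-1) % 2 := by push_cast at hpar ⊢; omega
      have hpar2 : (n : ℤ) % 2 = (h+1) % 2 := by push_cast at hpar ⊢; omega
      have castkey : ((∑ p ∈ gdPaths (n+1) h, downSteps k p : ℕ) : ℤ) =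
          ((∑ q ∈ gdPaths n (h-1), downSteps k q : ℕ) : ℤ) +
          (((∑ q ∈ gdPaths n (h+1), downSteps k q : ℕ) : ℤ) +
            (if h + 1 = k then ((gdPaths n (h+1)).card : ℤ) else 0)) := by
        rw [key]
        push_cast
        ring
      rw [castkey, ih (h-1) (by omega) hpar1, ih (h+1) (by omega) hpar2,
        G_formula n (h+1) (by omega) hpar2]
      have hparn : ((n:ℤ) + h + 1) % 2 = 0 := by push_cast at hpar ⊢; omega
      set s : ℤ := ((n:ℤ) + h + 1)/2 with hs
      have e1 : ((n:ℤ) + (h-1))/2 = s - 1 := by omega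
      have e2 : ((n:ℤ) + (h+1))/2 = s := by omega
      have e3 : (((n+1:ℕ):ℤ) + h)/2 = s := by push_cast; omega
      rw [e1, e2, e3]
      rcases lt_trichotomy (h+1) k with hc | hc | hc
      · rw [if_pos (by omega : h - 1 < k), if_pos (by omega : h + 1 < k),
          if_pos (by omega : h < k), if_neg (by omega : ¬ h + 1 = k)]
        have a1 : s - 1 + (k - (h-1)) = s + (k - h) := by ring
        have a2 : s + (k - (h+1)) = s + (k - h) - 1 := by ring
        have a3 : s - 1 + k + 1 = s + k + 1 - 1 := by ring
        rw [a1, a2, a3, binom_pascal, binom_pascal]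
        ring
      · rw [if_pos (by omega : h - 1 < k), if_neg (by omega : ¬ h + 1 < k),
          if_pos (by omega : h < k), if_pos hc]
        have a1 : s - 1 + (k - (h-1)) = s + 1 := by omega
        have a2 : s + (k - h) = s + 1 := by omega
        have a3 : s - 1 + k + 1 = s + k + 1 - 1 := by ring
        have a4 : ((n:ℤ) + (h+1))/2 = s := e2
        rw [a1, a2, a3, binom_pascal, binom_pascal]
        have a5 : s + 1 - 1 = s := by ring
        rw [a5]
        ring
      · -- h ≥ k
        rw [if_neg (by omega : ¬ h + 1 < k), if_neg (by omega : ¬ h < k),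
          if_neg (by omega : ¬ h + 1 = k)]
        have hsplit : (if h - 1 < k then k - (h-1) else 1) = 1 := by
          split_ifs with hd
          · omega
          · rfl
        rw [hsplit]
        have a1 : s - 1 + 1 = s + 1 - 1 := by ring
        have a3 : s - 1 + k + 1 = s + k + 1 - 1 := by ring
        rw [a1, a3, binom_pascal, binom_pascal]
        ring

/-- For k > h ≥ 0, the total number of k-down steps over all generalized Dyck paths from
(0,0) to (n,h) equals C(n, (n−h)/2 + k) − C(n, (n+h)/2 + k + 1). -/
theorem stmt4 (n h k : ℕ) (hhk : h < k) (hmod : n % 2 = h % 2) :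
    ((∑ p ∈ gdPaths n (h : ℤ), downSteps (k : ℤ) p : ℕ) : ℤ) =
      binom n (((n : ℤ) - h) / 2 + k) - binom n (((n : ℤ) + h) / 2 + k + 1) := by
  have hpar : (n : ℤ) % 2 = (h : ℤ) % 2 := by omega
  have := F_formula (k : ℤ) (by omega) n (h : ℤ) (by omega) hpar
  rw [if_pos (by omega : (h:ℤ) < (k:ℤ))] at this
  rw [this]
  have e : ((n:ℤ) + h)/2 + ((k:ℤ) - h) = ((n:ℤ) - h)/2 + k := by omega
  rw [e]
end

section
/- For all integers n ≥ 0 and k ≥ 1, the total number of k-down steps, summed over all Dyck paths from (0,0) to (n,0), equals the number of (2k+1)-tuples (p₀, p₁, …, p₂ₖ) of Dyck paths whose lengths sum to n − 2k (in particular both quantities are 0 when n < 2k or n is odd). -/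
open Finset

attribute [local instance] Classical.propDecidable

lemma pathHeight_zero {n : ℕ} (p : Fin n → Bool) : pathHeight p 0 = 0 := by
  simp [pathHeight]

lemma pathHeight_stable {n : ℕ} (p : Fin n → Bool) {m : ℕ} (h : n ≤ m) :
    pathHeight p m = pathHeight p n := by
  unfold pathHeight
  rw [Finset.filter_true_of_mem (fun j _ => lt_of_lt_of_le j.isLt h),
    Finset.filter_true_of_mem (fun j _ => j.isLt)]

lemma pathHeight_succ {n : ℕ} (p : Fin n → Bool) {i : ℕ} (h : i < n) :
    pathHeight p (i+1) = pathHeight p i + (if p ⟨i, h⟩ then 1 else -1) := by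
  unfold pathHeight
  rw [show (univ.filter fun j : Fin n => (j:ℕ) < i+1)
      = insert ⟨i,h⟩ (univ.filter fun j : Fin n => (j:ℕ) < i) by
    ext j
    simp only [Finset.mem_insert, Finset.mem_filter, Finset.mem_univ, true_and, Fin.ext_iff]
    omega]
  rw [Finset.sum_insert (by simp)]
  ring

lemma pathHeight_le {n : ℕ} (p : Fin n → Bool) (i : ℕ) : pathHeight p i ≤ (i : ℤ) := by
  unfold pathHeight
  calc ∑ j ∈ univ.filter (fun j : Fin n => (j:ℕ) < i), (if p j then (1:ℤ) else -1)
      ≤ ∑ _j ∈ univ.filter (fun j : Fin n => (j:ℕ) < i), (1:ℤ) := by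
        apply Finset.sum_le_sum; intro j _; split <;> omega
    _ = (univ.filter (fun j : Fin n => (j:ℕ) < i)).card := by simp
    _ ≤ (i : ℤ) := by
        have : (univ.filter (fun j : Fin n => (j:ℕ) < i)).card ≤ (Finset.range i).card := by
          refine Finset.card_le_card_of_injOn (fun j => (j : ℕ)) ?_ ?_
          · intro j hj; simp at hj ⊢; exact hj
          · intro a _ b _ hab; exact Fin.ext hab
        simp at this
        exact_mod_cast this

lemma mem_gdPaths {n : ℕ} {h : ℤ} {p : Fin n → Bool} :
    p ∈ gdPaths n h ↔ pathHeight p n = h ∧ ∀ i ≤ n, 0 ≤ pathHeight p i := by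
  simp [gdPaths, IsGDPath]

lemma gdPaths_nonneg {n : ℕ} {h : ℤ} {p : Fin n → Bool} (hp : p ∈ gdPaths n h) (t : ℕ) :
    0 ≤ pathHeight p t := by
  rcases le_or_gt t n with ht | ht
  · exact (mem_gdPaths.mp hp).2 t ht
  · rw [pathHeight_stable p ht.le]; exact (mem_gdPaths.mp hp).2 n le_rfl

lemma gdPaths_end {n : ℕ} {h : ℤ} {p : Fin n → Bool} (hp : p ∈ gdPaths n h) {t : ℕ}
    (ht : n ≤ t) : pathHeight p t = h := by
  rw [pathHeight_stable p ht]; exact (mem_gdPaths.mp hp).1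

lemma gdPaths_card_eq_zero {a k : ℕ} (h : a < k) : (gdPaths a (k:ℤ)).card = 0 := by
  rw [Finset.card_eq_zero, Finset.eq_empty_iff_forall_notMem]
  intro p hp
  have h1 := (mem_gdPaths.mp hp).1
  have h2 := pathHeight_le p a
  rw [h1] at h2
  omega

/-- the sub-path of `p` consisting of steps `s, s+1, ..., s+m-1`. -/
def piece {n : ℕ} (p : Fin n → Bool) (s m : ℕ) (h : s + m ≤ n) : Fin m → Bool :=
  fun j => p ⟨s + j, by omega⟩

lemma pathHeight_piece {n : ℕ} (p : Fin n → Bool) (s m : ℕ) (h : s + m ≤ n) {t : ℕ}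
    (ht : t ≤ m) : pathHeight (piece p s m h) t = pathHeight p (s + t) - pathHeight p s := by
  induction t with
  | zero => simp [pathHeight_zero]
  | succ t ih =>
    rw [pathHeight_succ (piece p s m h) (by omega : t < m), ih (by omega),
      show s + (t+1) = (s+t) + 1 by ring, pathHeight_succ p (by omega : s + t < n)]
    simp only [piece]
    rw [sub_add_eq_add_sub]
    rfl

/-- glue a path of length `c`, a single step `b`, and a path of length `n-1-c`. -/
def glue3 (n c : ℕ) (q : Fin c → Bool) (b : Bool) (r : Fin (n-1-c) → Bool) : Fin n → Bool :=
  fun j => if h1 : (j:ℕ) < c then q ⟨j, h1⟩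
    else if h2 : (j:ℕ) = c then b
    else r ⟨(j:ℕ) - (c+1), by have := j.isLt; omega⟩

lemma glue3_lt {n c : ℕ} (q : Fin c → Bool) (b : Bool) (r : Fin (n-1-c) → Bool)
    {j : Fin n} (hj : (j:ℕ) < c) : glue3 n c q b r j = q ⟨j, hj⟩ := by
  simp [glue3, hj]

lemma glue3_eq {n c : ℕ} (q : Fin c → Bool) (b : Bool) (r : Fin (n-1-c) → Bool)
    {j : Fin n} (hj : (j:ℕ) = c) : glue3 n c q b r j = b := by
  simp [glue3, hj]

lemma glue3_gt {n c : ℕ} (q : Fin c → Bool) (b : Bool) (r : Fin (n-1-c) → Bool)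
    {j : Fin n} (hj : c < (j:ℕ)) : glue3 n c q b r j = r ⟨(j:ℕ) - (c+1), by have := j.isLt; omega⟩ := by
  have h1 : ¬ ((j:ℕ) < c) := by omega
  have h2 : ¬ ((j:ℕ) = c) := by omega
  simp [glue3, h1, h2]

lemma pathHeight_glue3 {n c : ℕ} (hc : c < n) (q : Fin c → Bool) (b : Bool)
    (r : Fin (n-1-c) → Bool) (t : ℕ) :
    pathHeight (glue3 n c q b r) t
      = pathHeight q t + (if t ≤ c then 0 else if b then 1 else -1)
        + pathHeight r (t - (c+1)) := by
  induction t with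
  | zero => simp [pathHeight_zero]
  | succ t ih =>
    rcases lt_or_ge t n with htn | htn
    · rcases lt_trichotomy t c with h | h | h
      · rw [pathHeight_succ _ htn, ih, glue3_lt q b r (by simpa using h),
          pathHeight_succ q h]
        have e1 : t + 1 ≤ c := h
        have e2 : t ≤ c := by omega
        have e3 : t + 1 - (c+1) = 0 := by omega
        have e4 : t - (c+1) = 0 := by omega
        rw [e3, e4]
        simp [e1, e2]
        ring
      · rw [pathHeight_succ _ htn, ih, glue3_eq q b r (by simp [h])]
        have e3 : t + 1 - (c+1) = 0 := by omega
        have e4 : t - (c+1) = 0 := by omega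
        have e5 : pathHeight q (t+1) = pathHeight q t := by
          rw [pathHeight_stable q (by omega : c ≤ t+1), pathHeight_stable q (by omega : c ≤ t)]
        rw [e3, e4, e5]
        have e1 : ¬ (t+1 ≤ c) := by omega
        have e2 : t ≤ c := by omega
        simp [e1, e2]
        ring
      · rw [pathHeight_succ _ htn, ih, glue3_gt q b r (by simpa using h)]
        have e1 : ¬ (t + 1 ≤ c) := by omega
        have e2 : ¬ (t ≤ c) := by omega
        have e5 : t + 1 - (c+1) = (t - (c+1)) + 1 := by omega
        rw [e5, pathHeight_succ r (by omega : t - (c+1) < n - 1 - c)]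
        rw [pathHeight_stable q (by omega : c ≤ t+1), pathHeight_stable q (by omega : c ≤ t)]
        simp [e1, e2]
        ring
    · have g1 : pathHeight (glue3 n c q b r) (t+1) = pathHeight (glue3 n c q b r) t := by
        rw [pathHeight_stable _ (by omega : n ≤ t+1), pathHeight_stable _ (by omega : n ≤ t)]
      have g2 : pathHeight q (t+1) = pathHeight q t := by
        rw [pathHeight_stable q (by omega : c ≤ t+1), pathHeight_stable q (by omega : c ≤ t)]
      have g3 : pathHeight r (t+1-(c+1)) = pathHeight r (t-(c+1)) := by
        rw [pathHeight_stable r (by omega : n-1-c ≤ t+1-(c+1)),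
          pathHeight_stable r (by omega : n-1-c ≤ t-(c+1))]
      rw [g1, ih, g2, g3]
      have e1 : ¬ (t + 1 ≤ c) := by omega
      have e2 : ¬ (t ≤ c) := by omega
      simp [e1, e2]

/-- paths of length `b` that start at height `j`, stay nonnegative and end at height 0,
recorded as paths from 0 to `-j` staying `≥ -j`. -/
noncomputable def revSet (b j : ℕ) : Finset (Fin b → Bool) :=
  Finset.univ.filter fun r =>
    pathHeight r b = -(j:ℤ) ∧ ∀ t ≤ b, -(j:ℤ) ≤ pathHeight r t

def revPath {b : ℕ} (r : Fin b → Bool) : Fin b → Bool := fun j => ! r j.rev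

lemma pathHeight_revPath {b : ℕ} (r : Fin b → Bool) {t : ℕ} (ht : t ≤ b) :
    pathHeight (revPath r) t = pathHeight r (b - t) - pathHeight r b := by
  induction t with
  | zero => simp [pathHeight_zero]
  | succ t ih =>
    rw [pathHeight_succ _ (by omega : t < b), ih (by omega)]
    have hrev : (Fin.rev ⟨t, by omega⟩ : Fin b) = ⟨b - t - 1, by omega⟩ := by
      ext; simp [Fin.val_rev]; omega
    have hbt : b - t = (b - t - 1) + 1 := by omega
    rw [show b - (t+1) = b - t - 1 by omega, hbt, pathHeight_succ r (by omega : b - t - 1 < b)]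
    simp only [revPath, hrev]
    cases r ⟨b - t - 1, by omega⟩ <;> simp <;> ring

lemma revPath_revPath {b : ℕ} (r : Fin b → Bool) : revPath (revPath r) = r := by
  funext j; simp [revPath, Fin.rev_rev]

lemma revSet_card (b j : ℕ) : (revSet b j).card = (gdPaths b (j:ℤ)).card := by
  apply Finset.card_bij (fun r _ => revPath r)
  · intro r hr
    simp only [revSet, Finset.mem_filter, Finset.mem_univ, true_and] at hr
    rw [mem_gdPaths]
    constructor
    · rw [pathHeight_revPath r le_rfl]
      simp [pathHeight_zero, hr.1]
    · intro t htb
      rw [pathHeight_revPath r htb, hr.1]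
      have := hr.2 (b - t) (by omega)
      omega
  · intro r hr r' hr' hrr
    have := congrArg revPath hrr
    rwa [revPath_revPath, revPath_revPath] at this
  · intro p hp
    refine ⟨revPath p, ?_, (revPath_revPath p)⟩
    rw [mem_gdPaths] at hp
    simp only [revSet, Finset.mem_filter, Finset.mem_univ, true_and]
    constructor
    · rw [pathHeight_revPath p le_rfl]
      simp [pathHeight_zero, hp.1]
    · intro t htb
      rw [pathHeight_revPath p htb, hp.1]
      have := hp.2 (b - t) (by omega)
      omega

lemma mem_revSet {b j : ℕ} {r : Fin b → Bool} :
    r ∈ revSet b j ↔ pathHeight r b = -(j:ℤ) ∧ ∀ t ≤ b, -(j:ℤ) ≤ pathHeight r t := by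
  simp [revSet]

lemma B2 {n k : ℕ} (hk : 1 ≤ k) {i : ℕ} (hi : i < n) :
    ((gdPaths n 0).filter
        (fun p => p ⟨i, hi⟩ = false ∧ pathHeight p i = (k:ℤ))).card
      = (gdPaths i (k:ℤ)).card * (revSet (n-1-i) (k-1)).card := by
  have hcast : ((k-1:ℕ):ℤ) = (k:ℤ) - 1 := by omega
  rw [← Finset.card_product]
  apply (Finset.card_bij (fun x _ => glue3 n i x.1 false x.2) ?_ ?_ ?_).symm
  · -- maps into the filtered set
    rintro ⟨q, r⟩ hx
    simp only [Finset.mem_product] at hx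
    obtain ⟨hq, hr⟩ := hx
    have hq' := mem_gdPaths.mp hq
    have hr' := mem_revSet.mp hr
    have hrend : ∀ t, n - 1 - i ≤ t → pathHeight r t = -((k-1:ℕ):ℤ) := by
      intro t ht
      rw [pathHeight_stable r ht, hr'.1]
    have key : ∀ t, pathHeight (glue3 n i q false r) t
        = pathHeight q t + (if t ≤ i then 0 else -1) + pathHeight r (t - (i+1)) := by
      intro t
      rw [pathHeight_glue3 hi]
      norm_num
    simp only [Finset.mem_filter]
    refine ⟨?_, ?_, ?_⟩
    · rw [mem_gdPaths]
      constructor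
      · rw [key n, if_neg (by omega), pathHeight_stable q (by omega : i ≤ n),
          hq'.1, hrend (n - (i+1)) (by omega), hcast]
        ring
      · intro t htn
        rw [key t]
        rcases le_or_gt t i with h | h
        · rw [if_pos h, show t - (i+1) = 0 by omega, pathHeight_zero]
          have := hq'.2 t h
          omega
        · rw [if_neg (by omega), pathHeight_stable q (by omega : i ≤ t), hq'.1]
          have := hr'.2 (t - (i+1)) (by omega)
          omega
    · rw [glue3_eq q false r (by simp : ((⟨i, hi⟩ : Fin n) : ℕ) = i)]
    · rw [key i, if_pos le_rfl, show i - (i+1) = 0 by omega, pathHeight_zero, hq'.1]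
      ring
  · -- injective
    rintro ⟨q, r⟩ hx ⟨q', r'⟩ hx' heq
    dsimp only at heq
    have hqq : q = q' := by
      funext j
      have e1 : glue3 n i q false r ⟨(j:ℕ), by omega⟩ = q j := by
        rw [glue3_lt q false r (by exact j.isLt : ((⟨(j:ℕ), by omega⟩ : Fin n) : ℕ) < i)]
      have e2 : glue3 n i q' false r' ⟨(j:ℕ), by omega⟩ = q' j := by
        rw [glue3_lt q' false r' (by exact j.isLt : ((⟨(j:ℕ), by omega⟩ : Fin n) : ℕ) < i)]
      rw [← e1, ← e2, heq]
    have hrr : r = r' := by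
      funext t
      have hta : i + 1 + (t:ℕ) < n := by have := t.isLt; omega
      have e1 : glue3 n i q false r ⟨i + 1 + (t:ℕ), hta⟩ = r t := by
        rw [glue3_gt q false r (by simp; omega : i < ((⟨i + 1 + (t:ℕ), hta⟩ : Fin n) : ℕ))]
        congr 1
        ext
        simp
      have e2 : glue3 n i q' false r' ⟨i + 1 + (t:ℕ), hta⟩ = r' t := by
        rw [glue3_gt q' false r' (by simp; omega : i < ((⟨i + 1 + (t:ℕ), hta⟩ : Fin n) : ℕ))]
        congr 1
        ext
        simp
      rw [← e1, ← e2, heq]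
    rw [Prod.mk.injEq]
    exact ⟨hqq, hrr⟩
  · -- surjective
    intro p hp
    simp only [Finset.mem_filter] at hp
    obtain ⟨hpgd, hpi, hpk⟩ := hp
    have hp' := mem_gdPaths.mp hpgd
    have hpi1 : pathHeight p (i+1) = (k:ℤ) - 1 := by
      rw [pathHeight_succ p hi, hpk, hpi]
      simp only [Bool.false_eq_true, if_false]
      ring
    refine ⟨(piece p 0 i (by omega), piece p (i+1) (n-1-i) (by omega)), ?_, ?_⟩
    · simp only [Finset.mem_product]
      constructor
      · rw [mem_gdPaths]
        constructor
        · rw [pathHeight_piece p 0 i (by omega) le_rfl, pathHeight_zero]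
          simpa using hpk
        · intro t ht
          rw [pathHeight_piece p 0 i (by omega) ht, pathHeight_zero]
          simpa using hp'.2 t (by omega)
      · rw [mem_revSet]
        constructor
        · rw [pathHeight_piece p (i+1) (n-1-i) (by omega) le_rfl, hpi1,
            show i + 1 + (n-1-i) = n by omega, hp'.1, hcast]
          ring
        · intro t ht
          rw [pathHeight_piece p (i+1) (n-1-i) (by omega) ht, hpi1, hcast]
          have := hp'.2 (i+1+t) (by omega)
          omega
    · dsimp only
      funext j
      rcases lt_trichotomy (j:ℕ) i with h | h | h
      · rw [glue3_lt _ false _ h]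
        show p _ = p j
        congr 1
        ext
        simp
      · rw [glue3_eq _ false _ h]
        rw [show j = ⟨i, hi⟩ from Fin.ext h] at *
        exact hpi.symm
      · rw [glue3_gt _ false _ h]
        show p _ = p j
        congr 1
        ext
        simp only [piece]
        have := j.isLt
        omega

variable (F : ℕ → ℕ)

def dconv : ℕ → ℕ → ℕ
  | 0, N => if N = 0 then 1 else 0
  | m+1, N => ∑ c ∈ Finset.range (N+1), F c * dconv m (N - c)

lemma dconv_succ (m N : ℕ) :
    dconv F (m+1) N = ∑ c ∈ Finset.range (N+1), F c * dconv F m (N - c) := rfl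

lemma dconv_one (N : ℕ) : dconv F 1 N = F N := by
  rw [dconv_succ]
  rw [Finset.sum_eq_single_of_mem N (by simp)]
  · simp [dconv]
  · intro c hc hcN
    simp only [Finset.mem_range] at hc
    have : N - c ≠ 0 := by omega
    simp [dconv, this]

lemma dconv_add (m m' N : ℕ) :
    dconv F (m + m') N = ∑ c ∈ Finset.range (N+1), dconv F m c * dconv F m' (N - c) := by
  induction m generalizing N with
  | zero =>
    rw [Nat.zero_add, Finset.sum_eq_single_of_mem 0 (by simp)]
    · simp [dconv]
    · intro c hc hc0; simp [dconv, hc0]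
  | succ m ih =>
    rw [show m + 1 + m' = (m + m') + 1 by ring, dconv_succ]
    have lhs : ∑ c ∈ Finset.range (N+1), F c * dconv F (m+m') (N - c)
        = ∑ x ∈ (Finset.range (N+1)).sigma (fun c => Finset.range (N-c+1)),
            F x.1 * (dconv F m x.2 * dconv F m' (N - x.1 - x.2)) := by
      rw [Finset.sum_sigma]
      apply Finset.sum_congr rfl
      intro c hc
      rw [ih, Finset.mul_sum]
    rw [lhs]
    have rhs : ∑ e ∈ Finset.range (N+1), dconv F (m+1) e * dconv F m' (N - e)
        = ∑ y ∈ (Finset.range (N+1)).sigma (fun e => Finset.range (e+1)),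
            F y.2 * dconv F m (y.1 - y.2) * dconv F m' (N - y.1) := by
      rw [Finset.sum_sigma]
      apply Finset.sum_congr rfl
      intro e he
      rw [dconv_succ, Finset.sum_mul]
    rw [rhs]
    apply Finset.sum_bij' (fun x _ => (⟨x.1 + x.2, x.1⟩ : Σ _ : ℕ, ℕ))
      (fun y _ => (⟨y.2, y.1 - y.2⟩ : Σ _ : ℕ, ℕ))
    · intro x hx
      simp only [Finset.mem_sigma, Finset.mem_range] at hx ⊢
      omega
    · intro y hy
      simp only [Finset.mem_sigma, Finset.mem_range] at hy ⊢
      omega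
    · intro x hx
      simp only [Finset.mem_sigma, Finset.mem_range] at hx
      simp only [Nat.add_sub_cancel_left]
    · intro y hy
      simp only [Finset.mem_sigma, Finset.mem_range] at hy
      have : y.2 + (y.1 - y.2) = y.1 := by omega
      simp [this]
    · intro x hx
      simp only [Finset.mem_sigma, Finset.mem_range] at hx
      rw [Nat.add_sub_cancel_left, Nat.sub_sub]
      ring

lemma tuple_conv (m M N : ℕ) (h : N ≤ M) :
    ∑ f ∈ (Fintype.piFinset fun _ : Fin m => Finset.range (M+1)).filter
        (fun f => (∑ i, f i) = N), ∏ i, F (f i) = dconv F m N := by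
  induction m generalizing N with
  | zero =>
    rcases Nat.eq_zero_or_pos N with hN | hN
    · subst hN
      rw [Finset.filter_true_of_mem (fun f _ => by simp)]
      simp [dconv, Fintype.card_piFinset]
    · rw [Finset.filter_false_of_mem (fun f _ => by simp; omega)]
      have : N ≠ 0 := by omega
      simp [dconv, this]
  | succ m ih =>
    have key : ∑ f ∈ (Fintype.piFinset fun _ : Fin (m+1) => Finset.range (M+1)).filter
          (fun f => (∑ i, f i) = N), ∏ i, F (f i)
        = ∑ x ∈ (Finset.range (N+1)).sigma (fun c =>
              (Fintype.piFinset fun _ : Fin m => Finset.range (M+1)).filter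
                (fun g => (∑ i, g i) = N - c)),
            F x.1 * ∏ i, F (x.2 i) := by
      refine Finset.sum_bij' (fun f _ => (⟨f 0, Fin.tail f⟩ : Σ _ : ℕ, Fin m → ℕ))
        (fun x _ => Fin.cons x.1 x.2) ?hi ?hj ?left ?right ?hval
      case hi =>
        intro f hf
        simp only [Finset.mem_filter, Fintype.mem_piFinset, Finset.mem_range] at hf
        simp only [Finset.mem_sigma, Finset.mem_range, Finset.mem_filter,
          Fintype.mem_piFinset]
        have hsum := hf.2
        rw [Fin.sum_univ_succ] at hsum
        have htail : ∑ i : Fin m, Fin.tail f i = ∑ i : Fin m, f i.succ := rfl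
        exact ⟨by omega, fun i => hf.1 i.succ, by omega⟩
      case hj =>
        intro x hx
        simp only [Finset.mem_sigma, Finset.mem_range, Finset.mem_filter,
          Fintype.mem_piFinset] at hx
        simp only [Finset.mem_filter, Fintype.mem_piFinset, Finset.mem_range]
        constructor
        · intro i
          refine Fin.cases ?_ ?_ i
          · simpa using by omega
          · intro j; simpa using hx.2.1 j
        · rw [Fin.sum_univ_succ]
          simp [hx.2.2]
          omega
      case left => intro f hf; exact Fin.cons_self_tail f
      case right => intro x hx; simp
      case hval =>
        intro f hf
        rw [Fin.prod_univ_succ]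
        rfl
    rw [key, Finset.sum_sigma, dconv_succ]
    refine Finset.sum_congr rfl fun c hc => ?_
    simp only [Finset.mem_range] at hc
    dsimp only
    rw [← Finset.mul_sum]
    have := ih (N - c) (Nat.le_trans (Nat.sub_le N c) h)
    rw [this]

section B1
variable {a k : ℕ}

lemma glue3_height_le {c : ℕ} (hc : c < a) {q : Fin c → Bool} {r : Fin (a-1-c) → Bool}
    (hq : q ∈ gdPaths c 0) {t : ℕ} (ht : t ≤ c) :
    pathHeight (glue3 a c q true r) t = pathHeight q t := by
  rw [pathHeight_glue3 hc, if_pos ht, show t - (c+1) = 0 by omega, pathHeight_zero]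
  ring

lemma glue3_height_gt {c : ℕ} (hc : c < a) {q : Fin c → Bool} {r : Fin (a-1-c) → Bool}
    (hq : q ∈ gdPaths c 0) {t : ℕ} (ht : c < t) :
    pathHeight (glue3 a c q true r) t = 1 + pathHeight r (t - (c+1)) := by
  rw [pathHeight_glue3 hc, if_neg (by omega), pathHeight_stable q (by omega : c ≤ t),
    (mem_gdPaths.mp hq).1]
  simp

lemma glue3_mem {c : ℕ} (hc : c < a) {q : Fin c → Bool} {r : Fin (a-1-c) → Bool}
    (hq : q ∈ gdPaths c 0) (hr : r ∈ gdPaths (a-1-c) (k:ℤ)) :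
    glue3 a c q true r ∈ gdPaths a ((k:ℤ)+1) := by
  rw [mem_gdPaths]
  constructor
  · rw [glue3_height_gt hc hq (by omega : c < a),
      gdPaths_end hr (by omega : a - 1 - c ≤ a - (c+1))]
    ring
  · intro t hta
    rcases le_or_gt t c with h | h
    · rw [glue3_height_le hc hq h]
      exact (mem_gdPaths.mp hq).2 t h
    · rw [glue3_height_gt hc hq h]
      have := gdPaths_nonneg hr (t - (c+1))
      omega

lemma B1 (ha : 1 ≤ a) :
    (gdPaths a ((k:ℤ)+1)).card
      = ∑ c ∈ Finset.range a, (gdPaths c 0).card * (gdPaths (a-1-c) (k:ℤ)).card := by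
  have hT : ∑ c ∈ Finset.range a, (gdPaths c 0).card * (gdPaths (a-1-c) (k:ℤ)).card
      = ((Finset.range a).sigma fun c => (gdPaths c 0) ×ˢ (gdPaths (a-1-c) (k:ℤ))).card := by
    rw [Finset.card_sigma]
    exact (Finset.sum_congr rfl fun c _ => (Finset.card_product _ _).symm)
  rw [hT]
  apply (Finset.card_bij (fun x _ => glue3 a x.1 x.2.1 true x.2.2) ?_ ?_ ?_).symm
  · intro x hx
    simp only [Finset.mem_sigma, Finset.mem_range, Finset.mem_product] at hx
    exact glue3_mem hx.1 hx.2.1 hx.2.2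
  · rintro ⟨c, q, r⟩ hx ⟨c', q', r'⟩ hx' heq
    dsimp only at heq
    simp only [Finset.mem_sigma, Finset.mem_range, Finset.mem_product] at hx hx'
    obtain ⟨hc, hq, hr⟩ := hx
    obtain ⟨hc', hq', hr'⟩ := hx'
    have hcc : c = c' := by
      by_contra hne
      rcases lt_or_gt_of_ne hne with h | h
      · have h1 : pathHeight (glue3 a c q true r) c' = 1 + pathHeight r (c' - (c+1)) :=
          glue3_height_gt hc hq h
        have h2 : pathHeight (glue3 a c' q' true r') c' = pathHeight q' c' :=
          glue3_height_le hc' hq' le_rfl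
        rw [heq, h2, gdPaths_end hq' le_rfl] at h1
        have := gdPaths_nonneg hr (c' - (c+1))
        omega
      · have h1 : pathHeight (glue3 a c' q' true r') c = 1 + pathHeight r' (c - (c'+1)) :=
          glue3_height_gt hc' hq' h
        have h2 : pathHeight (glue3 a c q true r) c = pathHeight q c :=
          glue3_height_le hc hq le_rfl
        rw [← heq, h2, gdPaths_end hq le_rfl] at h1
        have := gdPaths_nonneg hr' (c - (c'+1))
        omega
    subst hcc
    refine congrArg (Sigma.mk c) ?_
    have hqq : q = q' := by
      funext j
      have e1 : glue3 a c q true r ⟨(j:ℕ), by omega⟩ = q j := by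
        rw [glue3_lt q true r (by exact j.isLt : ((⟨(j:ℕ), by omega⟩ : Fin a) : ℕ) < c)]
      have e2 : glue3 a c q' true r' ⟨(j:ℕ), by omega⟩ = q' j := by
        rw [glue3_lt q' true r' (by exact j.isLt : ((⟨(j:ℕ), by omega⟩ : Fin a) : ℕ) < c)]
      rw [← e1, ← e2, heq]
    have hrr : r = r' := by
      funext t
      have hta : c + 1 + (t:ℕ) < a := by have := t.isLt; omega
      have e1 : glue3 a c q true r ⟨c + 1 + (t:ℕ), hta⟩ = r t := by
        rw [glue3_gt q true r (by simp; omega : c < ((⟨c + 1 + (t:ℕ), hta⟩ : Fin a) : ℕ))]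
        congr 1
        ext
        simp
      have e2 : glue3 a c q' true r' ⟨c + 1 + (t:ℕ), hta⟩ = r' t := by
        rw [glue3_gt q' true r' (by simp; omega : c < ((⟨c + 1 + (t:ℕ), hta⟩ : Fin a) : ℕ))]
        congr 1
        ext
        simp
      rw [← e1, ← e2, heq]
    rw [hqq, hrr]
  · intro p hp
    have hp' := mem_gdPaths.mp hp
    -- the set of times at which the path is at height 0
    set Z : Finset ℕ := (Finset.range a).filter (fun t => pathHeight p t = 0) with hZ
    have h0Z : 0 ∈ Z := by
      simp only [hZ, Finset.mem_filter, Finset.mem_range]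
      exact ⟨by omega, pathHeight_zero p⟩
    set c := Z.max' ⟨0, h0Z⟩ with hcdef
    have hcZ : c ∈ Z := Z.max'_mem _
    have hca : c < a := by
      have := hcZ; simp only [hZ, Finset.mem_filter, Finset.mem_range] at this; exact this.1
    have hc0 : pathHeight p c = 0 := by
      have := hcZ; simp only [hZ, Finset.mem_filter, Finset.mem_range] at this; exact this.2
    have hpos : ∀ t, c < t → t ≤ a → 1 ≤ pathHeight p t := by
      intro t h1 h2
      rcases eq_or_lt_of_le h2 with h3 | h3
      · rw [h3, hp'.1]; omega
      · by_contra hcon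
        have h4 : pathHeight p t = 0 := by
          have := hp'.2 t h2; omega
        have : t ∈ Z := by simp only [hZ, Finset.mem_filter, Finset.mem_range]; exact ⟨h3, h4⟩
        have := Z.le_max' t this
        omega
    have hstep : p ⟨c, hca⟩ = true := by
      have h1 := pathHeight_succ p hca
      have h2 := hpos (c+1) (by omega) (by omega)
      rw [h1, hc0] at h2
      by_contra hcon
      rw [Bool.not_eq_true] at hcon
      rw [hcon] at h2
      simp at h2
    refine ⟨⟨c, piece p 0 c (by omega), piece p (c+1) (a-1-c) (by omega)⟩, ?_, ?_⟩
    · simp only [Finset.mem_sigma, Finset.mem_range, Finset.mem_product]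
      have hpc1 : pathHeight p (c+1) = 1 := by
        rw [pathHeight_succ p hca, hc0, hstep]; simp
      refine ⟨hca, ?_, ?_⟩
      · rw [mem_gdPaths]
        constructor
        · rw [pathHeight_piece p 0 c (by omega) le_rfl, pathHeight_zero]
          simpa using hc0
        · intro t ht
          rw [pathHeight_piece p 0 c (by omega) ht, pathHeight_zero]
          simpa using hp'.2 t (by omega)
      · rw [mem_gdPaths]
        constructor
        · rw [pathHeight_piece p (c+1) (a-1-c) (by omega) le_rfl, hpc1,
            show c + 1 + (a-1-c) = a by omega, hp'.1]
          ring
        · intro t ht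
          rw [pathHeight_piece p (c+1) (a-1-c) (by omega) ht, hpc1]
          have := hpos (c+1+t) (by omega) (by omega)
          omega
    · dsimp only
      funext j
      rcases lt_trichotomy (j:ℕ) c with h | h | h
      · rw [glue3_lt _ true _ h]
        show p _ = p j
        congr 1
        ext
        simp
      · rw [glue3_eq _ true _ h]
        rw [show j = ⟨c, hca⟩ from Fin.ext h] at *
        exact hstep.symm
      · rw [glue3_gt _ true _ h]
        show p _ = p j
        congr 1
        ext
        simp only [piece]
        have := j.isLt
        omega

lemma G_eq (F : ℕ → ℕ) (hF : F = fun m => (gdPaths m 0).card)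
    (dconv : ℕ → ℕ → ℕ)
    (hd0 : ∀ N, dconv 0 N = if N = 0 then 1 else 0)
    (hds : ∀ m N, dconv (m+1) N = ∑ c ∈ Finset.range (N+1), F c * dconv m (N - c)) :
    ∀ k a : ℕ, k ≤ a → (gdPaths a (k:ℤ)).card = dconv (k+1) (a - k) := by
  intro k
  induction k with
  | zero =>
    intro a _
    rw [hds, Finset.sum_eq_single_of_mem a (by simp)]
    · simp [hd0, hF]
    · intro c hc hca
      simp only [Finset.mem_range] at hc
      rw [hd0, if_neg (by omega)]
      simp
  | succ k ih =>
    intro a hka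
    have hcast : ((k+1 : ℕ) : ℤ) = (k:ℤ) + 1 := by push_cast; ring
    rw [hcast, B1 (by omega)]
    rw [hds]
    rw [show a - (k+1) + 1 = a - k by omega]
    rw [← Finset.sum_subset (Finset.range_subset_range.mpr (by omega : a - k ≤ a))
      (by
        intro c hc hc2
        simp only [Finset.mem_range] at hc hc2
        rw [gdPaths_card_eq_zero (by omega : a - 1 - c < k)]
        ring)]
    refine Finset.sum_congr rfl fun c hc => ?_
    simp only [Finset.mem_range] at hc
    rw [ih (a-1-c) (by omega), show a - 1 - c - k = a - (k+1) - c by omega]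
    simp [hF]


end B1

noncomputable def dyckF : ℕ → ℕ := fun m => (gdPaths m 0).card

lemma gdPaths_card_conv (k a : ℕ) (h : k ≤ a) :
    (gdPaths a (k:ℤ)).card = dconv dyckF (k+1) (a - k) :=
  G_eq dyckF rfl (dconv dyckF) (fun _ => rfl) (fun m N => dconv_succ dyckF m N) k a h

/-- The total number of k-down steps over all Dyck paths from (0,0) to (n,0) equals
the number of (2k+1)-tuples of Dyck paths whose lengths sum to n − 2k
(in particular both quantities are 0 when n < 2k or n is odd). -/
theorem stmt6 (n k : ℕ) (hk : 1 ≤ k) :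
    (∑ p ∈ gdPaths n 0, downSteps (k : ℤ) p) =
      ∑ f ∈ (Fintype.piFinset fun _ : Fin (2 * k + 1) => Finset.range (n + 1)) |>.filter
          (fun f => (∑ i, f i) + 2 * k = n),
        ∏ i, (gdPaths (f i) 0).card := by
  have key : (∑ p ∈ gdPaths n 0, downSteps (k : ℤ) p)
      = ∑ i ∈ Finset.range n,
          (gdPaths i (k:ℤ)).card * (gdPaths (n-1-i) ((k-1:ℕ):ℤ)).card := by
    have h1 : (∑ p ∈ gdPaths n 0, downSteps (k : ℤ) p)
        = ∑ i : Fin n, ((gdPaths n 0).filter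
            (fun p => p i = false ∧ pathHeight p (i:ℕ) = (k:ℤ))).card := by
      simp only [downSteps, Finset.card_filter]
      rw [Finset.sum_comm]
    rw [h1]
    have h2 : ∀ i : Fin n,
        ((gdPaths n 0).filter
            (fun p => p i = false ∧ pathHeight p (i:ℕ) = (k:ℤ))).card
          = (gdPaths (i:ℕ) (k:ℤ)).card * (gdPaths (n-1-(i:ℕ)) ((k-1:ℕ):ℤ)).card := by
      intro i
      rw [← revSet_card (n-1-(i:ℕ)) (k-1), ← B2 hk i.isLt]
    rw [Finset.sum_congr rfl (fun i _ => h2 i)]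
    exact Fin.sum_univ_eq_sum_range
      (fun i => (gdPaths i (k:ℤ)).card * (gdPaths (n-1-i) ((k-1:ℕ):ℤ)).card) n
  rw [key]
  rcases lt_or_ge n (2*k) with hn | hn
  · -- both sides vanish
    rw [Finset.sum_eq_zero, Finset.filter_false_of_mem, Finset.sum_empty]
    · intro f hf
      omega
    · intro i hi
      simp only [Finset.mem_range] at hi
      rcases lt_or_ge i k with h | h
      · rw [gdPaths_card_eq_zero h, Nat.zero_mul]
      · rw [gdPaths_card_eq_zero (show n-1-i < k-1 by omega), Nat.mul_zero]
  · -- main case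
    have hLHS : (∑ i ∈ Finset.range n,
          (gdPaths i (k:ℤ)).card * (gdPaths (n-1-i) ((k-1:ℕ):ℤ)).card)
        = dconv dyckF (2*k+1) (n - 2*k) := by
      have hsub : Finset.Ico k (n-k+1) ⊆ Finset.range n := by
        intro i hi
        simp only [Finset.mem_Ico] at hi
        simp only [Finset.mem_range]
        omega
      rw [← Finset.sum_subset hsub (by
        intro i hi hi2
        simp only [Finset.mem_range] at hi
        simp only [Finset.mem_Ico, not_and, not_lt] at hi2
        rcases lt_or_ge i k with h | h
        · rw [gdPaths_card_eq_zero h, Nat.zero_mul]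
        · rw [gdPaths_card_eq_zero (show n-1-i < k-1 by have := hi2 h; omega), Nat.mul_zero])]
      rw [Finset.sum_Ico_eq_sum_range]
      rw [show n - k + 1 - k = n - 2*k + 1 by omega]
      rw [show 2*k+1 = (k+1)+k by ring, dconv_add dyckF]
      refine Finset.sum_congr rfl fun j hj => ?_
      simp only [Finset.mem_range] at hj
      rw [gdPaths_card_conv k (k+j) (by omega),
        gdPaths_card_conv (k-1) (n-1-(k+j)) (by omega),
        show k + j - k = j by omega,
        show k - 1 + 1 = k by omega,
        show n - 1 - (k+j) - (k-1) = n - 2*k - j by omega]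
    rw [hLHS]
    have hfil : (Fintype.piFinset fun _ : Fin (2 * k + 1) => Finset.range (n + 1)).filter
          (fun f => (∑ i, f i) + 2 * k = n)
        = (Fintype.piFinset fun _ : Fin (2 * k + 1) => Finset.range (n + 1)).filter
          (fun f => (∑ i, f i) = n - 2*k) := by
      apply Finset.filter_congr
      intro f _
      omega
    rw [hfil]
    exact (tuple_conv dyckF (2*k+1) n (n - 2*k) (Nat.sub_le n (2*k))).symm
end
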